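/- Let 𝒳 ⊆ ℝ^d be a closed convex set containing the origin, let V ∈ ℝ^{d×d} be positive definite, let â_1, …, â_n ∈ ℝ^d, let b ∈ ℝ^n with b_min := min_{i∈[n]} b_i > 0, and let β ≥ 0. Suppose x̃ ∈ 𝒳 satisfies â_iᵀ x̃ − β‖x̃‖_{V^{-1}} ≤ b_i for all i ∈ [n]. Then the maximum γ := max{ μ ∈ [0,1] : μ x̃ ∈ 𝒳 and â_iᵀ(μ x̃) + β‖μ x̃‖_{V^{-1}} ≤ b_i for all i ∈ [n] } exists and satisfies γ ≥ 1 − (2/b_min) · β‖γ x̃‖_{V^{-1}}. -/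

import Mathlib

open Matrix

/-- Weighted norm `‖x‖_M := √(xᵀ M x)`. -/
noncomputable def wnorm {d : ℕ} (M : Matrix (Fin d) (Fin d) ℝ) (x : Fin d → ℝ) : ℝ :=
  Real.sqrt (x ⬝ᵥ M.mulVec x)

lemma wnorm_smul {d : ℕ} (M : Matrix (Fin d) (Fin d) ℝ) (x : Fin d → ℝ) (μ : ℝ) :
    wnorm M (μ • x) = |μ| * wnorm M x := by
  unfold wnorm
  rw [Matrix.mulVec_smul, smul_dotProduct, dotProduct_smul, smul_eq_mul, smul_eq_mul,
    ← mul_assoc, ← sq, Real.sqrt_mul (sq_nonneg μ), Real.sqrt_sq_eq_abs]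

theorem stmt1 {d n : ℕ} (𝒳 : Set (Fin d → ℝ)) (hclosed : IsClosed 𝒳)
    (hconv : Convex ℝ 𝒳) (h0 : (0 : Fin d → ℝ) ∈ 𝒳)
    (V : Matrix (Fin d) (Fin d) ℝ) (hV : V.PosDef)
    (ahat : Fin n → Fin d → ℝ) (b : Fin n → ℝ) (bmin : ℝ)
    (hbmin : IsLeast (Set.range b) bmin) (hbpos : 0 < bmin)
    (β : ℝ) (hβ : 0 ≤ β)
    (xt : Fin d → ℝ) (hxt : xt ∈ 𝒳)
    (hopt : ∀ i, ahat i ⬝ᵥ xt - β * wnorm V⁻¹ xt ≤ b i) :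
    ∃ γ : ℝ,
      IsGreatest {μ : ℝ | μ ∈ Set.Icc (0 : ℝ) 1 ∧ μ • xt ∈ 𝒳 ∧
          ∀ i, ahat i ⬝ᵥ (μ • xt) + β * wnorm V⁻¹ (μ • xt) ≤ b i} γ ∧
        1 - (2 / bmin) * (β * wnorm V⁻¹ (γ • xt)) ≤ γ := by
  set c := wnorm V⁻¹ xt with hc_def
  have hc : 0 ≤ c := Real.sqrt_nonneg _
  have hbc : 0 ≤ β * c := mul_nonneg hβ hc
  set S : Set ℝ := {μ : ℝ | μ ∈ Set.Icc (0 : ℝ) 1 ∧ μ • xt ∈ 𝒳 ∧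
      ∀ i, ahat i ⬝ᵥ (μ • xt) + β * wnorm V⁻¹ (μ • xt) ≤ b i} with hS_def
  have hsub : S ⊆ Set.Icc (0 : ℝ) 1 := fun μ hμ => hμ.1
  -- closedness
  have hcont : Continuous fun μ : ℝ => μ • xt := continuous_id.smul continuous_const
  have hSclosed : IsClosed S := by
    have h1 : IsClosed ((fun μ : ℝ => μ • xt) ⁻¹' 𝒳) := hclosed.preimage hcont
    have h2 : ∀ i, IsClosed {μ : ℝ | ahat i ⬝ᵥ (μ • xt) + β * wnorm V⁻¹ (μ • xt) ≤ b i} := by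
      intro i
      have heq : {μ : ℝ | ahat i ⬝ᵥ (μ • xt) + β * wnorm V⁻¹ (μ • xt) ≤ b i}
          = {μ : ℝ | μ * (ahat i ⬝ᵥ xt) + β * (|μ| * c) ≤ b i} := by
        ext μ
        simp [wnorm_smul, dotProduct_smul, smul_eq_mul, ← hc_def]
      rw [heq]
      exact isClosed_le (by fun_prop) continuous_const
    have : S = Set.Icc (0:ℝ) 1 ∩ ((fun μ : ℝ => μ • xt) ⁻¹' 𝒳) ∩ ⋂ i,
        {μ : ℝ | ahat i ⬝ᵥ (μ • xt) + β * wnorm V⁻¹ (μ • xt) ≤ b i} := by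
      ext μ
      simp only [hS_def, Set.mem_setOf_eq, Set.mem_inter_iff, Set.mem_iInter, Set.mem_preimage]
      tauto
    rw [this]
    exact (isClosed_Icc.inter h1).inter (isClosed_iInter h2)
  -- the candidate lower bound
  have hden : (0:ℝ) < bmin + 2 * (β * c) := by linarith
  set μ₀ : ℝ := bmin / (bmin + 2 * (β * c)) with hμ₀_def
  have hμ₀pos : 0 < μ₀ := div_pos hbpos hden
  have hμ₀le1 : μ₀ ≤ 1 := by
    rw [div_le_one hden]; linarith
  have hbi : ∀ i, bmin ≤ b i := fun i => hbmin.2 ⟨i, rfl⟩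
  have hμ₀mem : μ₀ ∈ S := by
    refine ⟨⟨hμ₀pos.le, hμ₀le1⟩, ?_, ?_⟩
    · have := hconv h0 hxt (by linarith : (0:ℝ) ≤ 1 - μ₀) hμ₀pos.le (by ring)
      simpa using this
    · intro i
      rw [wnorm_smul, dotProduct_smul, smul_eq_mul, abs_of_pos hμ₀pos]
      have h1 : ahat i ⬝ᵥ xt ≤ b i + β * c := by have := hopt i; linarith
      have h2 : μ₀ * (ahat i ⬝ᵥ xt) ≤ μ₀ * (b i + β * c) :=
        mul_le_mul_of_nonneg_left h1 hμ₀pos.le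
      have h3 : μ₀ * (b i + β * c) + β * (μ₀ * c) = μ₀ * (b i + 2 * (β * c)) := by ring
      have h4 : μ₀ * (b i + 2 * (β * c)) ≤ b i := by
        rw [hμ₀_def, div_mul_eq_mul_div, div_le_iff₀ hden]
        nlinarith [hbi i, hbc]
      linarith
  -- existence of greatest element
  have hScomp : IsCompact S := isCompact_Icc.of_isClosed_subset hSclosed hsub
  obtain ⟨γ, hγ⟩ := hScomp.exists_isGreatest ⟨μ₀, hμ₀mem⟩
  refine ⟨γ, hγ, ?_⟩
  have hγμ₀ : μ₀ ≤ γ := hγ.2 hμ₀mem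
  have hγpos : 0 < γ := lt_of_lt_of_le hμ₀pos hγμ₀
  have hkey : bmin ≤ γ * (bmin + 2 * (β * c)) := by
    rw [← div_le_iff₀ hden]; exact hγμ₀
  rw [wnorm_smul, abs_of_pos hγpos]
  rw [← mul_le_mul_iff_right₀ hbpos]
  have heq : bmin * (1 - 2 / bmin * (β * (γ * c))) = bmin - 2 * (β * (γ * c)) := by
    field_simp
  rw [heq]
  nlinarith [hkey]
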